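/- Fix ħ > 0 and a real number E such that E ≠ ħ(n + 1/2) for every natural number n. If f : ℝ → ℝ is twice continuously differentiable, square-integrable on ℝ, and satisfies (1/2)·( x²·f(x) − ħ²·f''(x) ) = E·f(x) for all x ∈ ℝ, then f is identically zero. That is, the harmonic-oscillator eigenvalue equation has nonzero square-integrable solutions only for the quantized energies E = ħ(n + 1/2). -/

import Mathlib

open Real MeasureTheory Set Filter Topology

lemma keyA {h h1 h2 : ℝ → ℝ} {R : ℝ}
    (hd : ∀ x, HasDerivAt h (h1 x) x) (hd1 : ∀ x, HasDerivAt h1 (h2 x) x)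
    (hpos : ∀ x, 0 ≤ h x) (h2pos : ∀ x ∈ Ici R, 0 ≤ h2 x)
    (hint : IntegrableOn h (Ioi R) volume) :
    (∀ a ∈ Ici R, h1 a ≤ 0) ∧ Tendsto h1 atTop (𝓝 0) := by
  have hcont1 : Continuous h1 := continuous_iff_continuousAt.2 fun x => (hd1 x).continuousAt
  have hcont : Continuous h := continuous_iff_continuousAt.2 fun x => (hd x).continuousAt
  -- h1 is monotone on [R, ∞)
  have mono1 : MonotoneOn h1 (Ici R) := by
    apply monotoneOn_of_deriv_nonneg (convex_Ici R) hcont1.continuousOn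
      (fun x _ => (hd1 x).differentiableAt.differentiableWithinAt)
    intro x hx
    rw [(hd1 x).deriv]
    exact h2pos x (le_of_lt (by simpa using hx))
  have step2 : ∀ a ∈ Ici R, h1 a ≤ 0 := by
    intro a ha
    by_contra hc
    push_neg at hc
    have hlin : ∀ x ∈ Ici a, h1 a * (x - a) ≤ h x := by
      have mono2 : MonotoneOn (fun x => h x - h1 a * x) (Ici a) := by
        apply monotoneOn_of_deriv_nonneg (convex_Ici a)
          (by fun_prop) (fun x _ => ((hd x).sub
            ((hasDerivAt_id x).const_mul (h1 a))).differentiableAt.differentiableWithinAt)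
        intro x hx
        rw [((hd x).sub ((hasDerivAt_id x).const_mul (h1 a))).deriv]
        simp only [mul_one, sub_nonneg]
        have hax : a < x := by simpa using hx
        exact mono1 ha (ha.trans hax.le) hax.le
      intro x hx
      have := mono2 self_mem_Ici hx hx
      simp only at this
      nlinarith [hpos a]
    -- contradiction with integrability
    have hi1 : IntegrableOn h (Ioi (a + 1)) volume :=
      hint.mono_set (Ioi_subset_Ioi (by linarith [mem_Ici.1 ha]))
    have hi2 : IntegrableOn (fun _ : ℝ => h1 a) (Ioi (a + 1)) volume := by
      apply Integrable.mono hi1 aestronglyMeasurable_const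
      filter_upwards [ae_restrict_mem measurableSet_Ioi] with x hx
      have h1x : h1 a * (x - a) ≤ h x := hlin x (by simp only [mem_Ioi] at hx; exact mem_Ici.2 (by linarith))
      have : h1 a ≤ h x := by nlinarith [mem_Ioi.1 hx]
      rw [Real.norm_eq_abs, Real.norm_eq_abs, abs_of_pos hc, abs_of_nonneg (hpos x)]
      exact this
    rw [integrableOn_const_iff] at hi2
    rcases hi2 with h' | h'
    · exact absurd (enorm_eq_zero.1 h') (ne_of_gt hc)
    · simp [Real.volume_Ioi] at h'
  refine ⟨step2, ?_⟩
  -- h1 → 0 at +∞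
  rw [tendsto_order]
  constructor
  · intro b hb
    by_contra hcon
    rw [not_eventually] at hcon
    -- h1 x ≤ b for arbitrarily large x, hence (by monotonicity) for all x ≥ R
    have hall : ∀ x ∈ Ici R, h1 x ≤ b := by
      intro x hx
      rcases ((frequently_atTop).1 hcon (max x R)) with ⟨y, hy, hy2⟩
      push_neg at hy2
      exact le_trans (mono1 hx (le_trans (le_max_right x R) hy) (le_trans (le_max_left x R) hy)) hy2
    -- then h x ≤ h R + b (x - R) → -∞, contradiction with h ≥ 0
    have mono3 : AntitoneOn (fun x => h x - b * x) (Ici R) := by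
      apply antitoneOn_of_deriv_nonpos (convex_Ici R)
        (by fun_prop) (fun x _ => ((hd x).sub
          ((hasDerivAt_id x).const_mul b)).differentiableAt.differentiableWithinAt)
      intro x hx
      rw [((hd x).sub ((hasDerivAt_id x).const_mul b)).deriv]
      simp only [mul_one, sub_nonpos]
      exact hall x (le_of_lt (by simpa using hx))
    -- pick x large enough that h R + b * (x - R) < 0
    obtain ⟨x, hx1, hx2⟩ : ∃ x, R ≤ x ∧ h R + b * (x - R) < 0 := by
      have hbpos : 0 < -b := by linarith
      have hq : 0 ≤ (h R + 1) / (-b) := by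
        apply div_nonneg _ hbpos.le
        nlinarith [hpos R]
      refine ⟨R + (h R + 1) / (-b), by linarith, ?_⟩
      have : b * ((h R + 1) / (-b)) = -(h R + 1) := by
        field_simp [hb.ne]
      nlinarith [hpos R]
    have := mono3 self_mem_Ici (mem_Ici.2 hx1) hx1
    simp only at this
    nlinarith [hpos x]
  · intro b hb
    filter_upwards [eventually_ge_atTop R] with x hx
    exact lt_of_le_of_lt (step2 x hx) hb

lemma side (hb E : ℝ) (f : ℝ → ℝ) (hhb : 0 < hb) (hreg : ContDiff ℝ 2 f)
    (hL2 : Integrable (fun x : ℝ => f x ^ 2) volume)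
    (hODE : ∀ x, deriv (deriv f) x = ((x ^ 2 - 2 * E) / hb ^ 2) * f x) :
    IntegrableOn (fun x => deriv f x ^ 2) (Ioi 0) volume ∧
    IntegrableOn (fun x => x ^ 2 * f x ^ 2) (Ioi 0) volume ∧
    IntegrableOn (fun x => x * (f x * deriv f x)) (Ioi 0) volume ∧
    hb ^ 2 * (∫ x in Ioi 0, deriv f x ^ 2) + (∫ x in Ioi 0, x ^ 2 * f x ^ 2)
      = 2 * E * (∫ x in Ioi 0, f x ^ 2) - hb ^ 2 * (f 0 * deriv f 0) ∧
    (∫ x in Ioi 0, x * (f x * deriv f x)) = -(1 / 2) * ∫ x in Ioi 0, f x ^ 2 := by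
  have hb2 : (hb : ℝ) ^ 2 ≠ 0 := pow_ne_zero 2 (ne_of_gt hhb)
  set q : ℝ → ℝ := fun x => (x ^ 2 - 2 * E) / hb ^ 2 with hq_def
  have hdiff : Differentiable ℝ f := hreg.differentiable (by norm_num)
  have hdiff' : Differentiable ℝ (deriv f) := by
    have := (contDiff_succ_iff_deriv (n := 1)).1 (by exact_mod_cast hreg)
    exact this.2.2.differentiable (by norm_num)
  have hcontf : Continuous f := hdiff.continuous
  have hcontv : Continuous (deriv f) := hdiff'.continuous
  have hcontq : Continuous q := by fun_prop
  have hdu : ∀ x, HasDerivAt f (deriv f x) x := fun x => (hdiff x).hasDerivAt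
  have hdv : ∀ x, HasDerivAt (deriv f) (q x * f x) x := by
    intro x
    have := (hdiff' x).hasDerivAt
    rwa [hODE x] at this
  -- the squared function and its derivatives
  have hd : ∀ x : ℝ, HasDerivAt (fun y => f y ^ 2) (2 * (f x * deriv f x)) x := by
    intro x
    have : HasDerivAt (fun y => f y * f y) (deriv f x * f x + f x * deriv f x) x :=
      ((hdu x).fun_mul (hdu x))
    convert this using 1
    · funext y; ring
    · ring
  have hd1 : ∀ x : ℝ, HasDerivAt (fun y => 2 * (f y * deriv f y))
      (2 * (deriv f x) ^ 2 + 2 * q x * f x ^ 2) x := by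
    intro x
    have : HasDerivAt (fun y => 2 * (f y * deriv f y))
        (2 * (deriv f x * deriv f x + f x * (q x * f x))) x :=
      ((hdu x).fun_mul (hdv x)).const_mul 2
    convert this using 1; ring
  -- threshold beyond which q ≥ 0
  set R : ℝ := Real.sqrt (max 0 (2 * E)) with hR_def
  have hR0 : 0 ≤ R := Real.sqrt_nonneg _
  have hqpos : ∀ x ∈ Ici R, 0 ≤ q x := by
    intro x hx
    have hx0 : 0 ≤ x := le_trans hR0 hx
    have : max 0 (2 * E) ≤ x ^ 2 := by
      rw [← Real.sq_sqrt (le_max_left 0 (2 * E))]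
      exact pow_le_pow_left₀ hR0 hx 2
    have h2E : 2 * E ≤ x ^ 2 := le_trans (le_max_right _ _) this
    apply div_nonneg (by linarith) (by positivity)
  obtain ⟨hneg, htend⟩ := keyA hd hd1 (fun x => sq_nonneg (f x))
    (fun x hx => by nlinarith [hqpos x hx, sq_nonneg (deriv f x), sq_nonneg (f x)])
    hL2.integrableOn
  have htend' : Tendsto (fun x => f x * deriv f x) atTop (𝓝 0) := by
    have := htend.const_mul (1 / 2 : ℝ)
    simpa using this
  -- integration by parts: ∫ f·(q f) = [f f'] - ∫ f'²
  have parts : ∀ b : ℝ, (∫ x in (0:ℝ)..b, f x * (q x * f x))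
      = f b * deriv f b - f 0 * deriv f 0 - ∫ x in (0:ℝ)..b, deriv f x * deriv f x := by
    intro b
    exact intervalIntegral.integral_mul_deriv_eq_deriv_mul
      (fun x _ => hdu x) (fun x _ => hdv x)
      (hcontv.intervalIntegrable _ _) ((hcontq.mul hcontf).intervalIntegrable _ _)
  have key_b : ∀ b : ℝ, (∫ x in (0:ℝ)..b, (deriv f x ^ 2 + x ^ 2 / hb ^ 2 * f x ^ 2))
      = f b * deriv f b - f 0 * deriv f 0 + 2 * E / hb ^ 2 * ∫ x in (0:ℝ)..b, f x ^ 2 := by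
    intro b
    have e1 : EqOn (fun x => deriv f x ^ 2 + x ^ 2 / hb ^ 2 * f x ^ 2)
        (fun x => (deriv f x * deriv f x + f x * (q x * f x)) + 2 * E / hb ^ 2 * f x ^ 2)
        (Set.uIcc 0 b) := by
      intro x _
      simp only [hq_def]
      field_simp
      ring
    rw [intervalIntegral.integral_congr e1,
        intervalIntegral.integral_add
          (((hcontv.fun_mul hcontv).fun_add (hcontf.fun_mul (hcontq.fun_mul hcontf))).intervalIntegrable _ _)
          ((continuous_const.fun_mul (hcontf.fun_pow 2)).intervalIntegrable _ _),
        intervalIntegral.integral_add ((hcontv.fun_mul hcontv).intervalIntegrable _ _)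
          ((hcontf.fun_mul (hcontq.fun_mul hcontf)).intervalIntegrable _ _),
        parts b, intervalIntegral.integral_const_mul]
    ring
  have hintf2 : IntegrableOn (fun x => f x ^ 2) (Ioi 0) volume := hL2.integrableOn
  have t1 : Tendsto (fun b => ∫ x in (0:ℝ)..b, f x ^ 2) atTop (𝓝 (∫ x in Ioi 0, f x ^ 2)) :=
    intervalIntegral_tendsto_integral_Ioi 0 hintf2 tendsto_id
  have tG : Tendsto (fun b => ∫ x in (0:ℝ)..b, (deriv f x ^ 2 + x ^ 2 / hb ^ 2 * f x ^ 2))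
      atTop (𝓝 (0 - f 0 * deriv f 0 + 2 * E / hb ^ 2 * ∫ x in Ioi 0, f x ^ 2)) := by
    have h0 : Tendsto (fun b : ℝ => f b * deriv f b - f 0 * deriv f 0
        + 2 * E / hb ^ 2 * ∫ x in (0:ℝ)..b, f x ^ 2) atTop
        (𝓝 (0 - f 0 * deriv f 0 + 2 * E / hb ^ 2 * ∫ x in Ioi 0, f x ^ 2)) :=
      (htend'.sub tendsto_const_nhds).add (t1.const_mul _)
    exact h0.congr (fun b => (key_b b).symm)
  have hcomb_nonneg : ∀ x : ℝ, 0 ≤ deriv f x ^ 2 + x ^ 2 / hb ^ 2 * f x ^ 2 := by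
    intro x; positivity
  have hcomb_cont : Continuous (fun x : ℝ => deriv f x ^ 2 + x ^ 2 / hb ^ 2 * f x ^ 2) := by
    fun_prop
  have hIcomb : IntegrableOn (fun x => deriv f x ^ 2 + x ^ 2 / hb ^ 2 * f x ^ 2) (Ioi 0) volume := by
    obtain ⟨C, hC⟩ := tG.isBoundedUnder_le
    apply integrableOn_Ioi_of_intervalIntegral_norm_bounded C 0
      (fun i : ℝ => hcomb_cont.integrableOn_Ioc) tendsto_id
    filter_upwards [hC] with i hi
    have : (fun x => ‖deriv f x ^ 2 + x ^ 2 / hb ^ 2 * f x ^ 2‖)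
        = fun x => deriv f x ^ 2 + x ^ 2 / hb ^ 2 * f x ^ 2 :=
      funext fun x => by rw [Real.norm_eq_abs, abs_of_nonneg (hcomb_nonneg x)]
    rw [this]
    exact hi
  have hIv : IntegrableOn (fun x => deriv f x ^ 2) (Ioi 0) volume := by
    apply Integrable.mono' hIcomb ((hcontv.fun_pow 2).aestronglyMeasurable)
    filter_upwards with x
    rw [Real.norm_eq_abs, abs_of_nonneg (sq_nonneg _)]
    have h1' : 0 ≤ x ^ 2 / hb ^ 2 * f x ^ 2 := by positivity
    linarith
  have hIx2' : IntegrableOn (fun x => x ^ 2 / hb ^ 2 * f x ^ 2) (Ioi 0) volume := by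
    have hm : Continuous (fun x : ℝ => x ^ 2 / hb ^ 2 * f x ^ 2) := by fun_prop
    apply Integrable.mono' hIcomb hm.aestronglyMeasurable
    filter_upwards with x
    have h1' : 0 ≤ x ^ 2 / hb ^ 2 * f x ^ 2 := by positivity
    rw [Real.norm_eq_abs, abs_of_nonneg h1']
    nlinarith [sq_nonneg (deriv f x)]
  have hIx2 : IntegrableOn (fun x => x ^ 2 * f x ^ 2) (Ioi 0) volume := by
    have := hIx2'.const_mul (hb ^ 2)
    apply this.congr
    filter_upwards with x
    field_simp
  -- the energy identity on Ioi 0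
  have tG2 : Tendsto (fun b => ∫ x in (0:ℝ)..b, (deriv f x ^ 2 + x ^ 2 / hb ^ 2 * f x ^ 2))
      atTop (𝓝 (∫ x in Ioi 0, (deriv f x ^ 2 + x ^ 2 / hb ^ 2 * f x ^ 2))) :=
    intervalIntegral_tendsto_integral_Ioi 0 hIcomb tendsto_id
  have hid0 : (∫ x in Ioi 0, (deriv f x ^ 2 + x ^ 2 / hb ^ 2 * f x ^ 2))
      = 0 - f 0 * deriv f 0 + 2 * E / hb ^ 2 * ∫ x in Ioi 0, f x ^ 2 :=
    tendsto_nhds_unique tG2 tG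
  have hsplit : (∫ x in Ioi 0, (deriv f x ^ 2 + x ^ 2 / hb ^ 2 * f x ^ 2))
      = (∫ x in Ioi 0, deriv f x ^ 2) + (hb ^ 2)⁻¹ * ∫ x in Ioi 0, x ^ 2 * f x ^ 2 := by
    rw [MeasureTheory.integral_add hIv hIx2']
    congr 1
    rw [← MeasureTheory.integral_const_mul]
    apply MeasureTheory.integral_congr_ae
    filter_upwards with x
    field_simp
  have hident : hb ^ 2 * (∫ x in Ioi 0, deriv f x ^ 2) + (∫ x in Ioi 0, x ^ 2 * f x ^ 2)
      = 2 * E * (∫ x in Ioi 0, f x ^ 2) - hb ^ 2 * (f 0 * deriv f 0) := by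
    rw [hsplit] at hid0
    have h' := congrArg (fun t => hb ^ 2 * t) hid0
    field_simp at h'
    linarith
  -- second boundary identity
  have parts2 : ∀ b : ℝ, (∫ x in (0:ℝ)..b, x * (2 * (f x * deriv f x)))
      = b * f b ^ 2 - 0 * f 0 ^ 2 - ∫ x in (0:ℝ)..b, 1 * f x ^ 2 := by
    intro b
    exact intervalIntegral.integral_mul_deriv_eq_deriv_mul
      (fun x _ => hasDerivAt_id x) (fun x _ => hd x)
      (continuous_const.intervalIntegrable _ _)
      ((continuous_const.mul (hcontf.mul hcontv)).intervalIntegrable _ _)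
  have hIxfv : IntegrableOn (fun x => x * (f x * deriv f x)) (Ioi 0) volume := by
    have hg : IntegrableOn (fun x => (1/2 : ℝ) * (x ^ 2 * f x ^ 2 + deriv f x ^ 2)) (Ioi 0) volume :=
      (hIx2.add hIv).const_mul _
    have hm : Continuous (fun x : ℝ => x * (f x * deriv f x)) := by fun_prop
    apply Integrable.mono' hg hm.aestronglyMeasurable
    filter_upwards with x
    rw [Real.norm_eq_abs]
    have h1 : |x * (f x * deriv f x)| = |x * f x| * |deriv f x| := by
      rw [← abs_mul]; ring_nf
    rw [h1]
    nlinarith [sq_nonneg (|x * f x| - |deriv f x|), sq_abs (x * f x), sq_abs (deriv f x),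
      abs_nonneg (x * f x), abs_nonneg (deriv f x), sq_nonneg (x * f x)]
  have tW : Tendsto (fun b : ℝ => b * f b ^ 2) atTop
      (𝓝 (2 * (∫ x in Ioi 0, x * (f x * deriv f x)) + ∫ x in Ioi 0, f x ^ 2)) := by
    have t3 : Tendsto (fun b => ∫ x in (0:ℝ)..b, x * (f x * deriv f x)) atTop
        (𝓝 (∫ x in Ioi 0, x * (f x * deriv f x))) :=
      intervalIntegral_tendsto_integral_Ioi 0 hIxfv tendsto_id
    have h0 : Tendsto (fun b : ℝ => 2 * (∫ x in (0:ℝ)..b, x * (f x * deriv f x))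
        + ∫ x in (0:ℝ)..b, f x ^ 2) atTop
        (𝓝 (2 * (∫ x in Ioi 0, x * (f x * deriv f x)) + ∫ x in Ioi 0, f x ^ 2)) :=
      (t3.const_mul _).add t1
    apply h0.congr
    intro b
    have e3 : (∫ x in (0:ℝ)..b, x * (2 * (f x * deriv f x)))
        = 2 * ∫ x in (0:ℝ)..b, x * (f x * deriv f x) := by
      rw [← intervalIntegral.integral_const_mul]
      apply intervalIntegral.integral_congr
      intro x _
      ring
    have e4 : (∫ x in (0:ℝ)..b, (1:ℝ) * f x ^ 2) = ∫ x in (0:ℝ)..b, f x ^ 2 := by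
      apply intervalIntegral.integral_congr
      intro x _
      ring
    have := parts2 b
    rw [e3, e4] at this
    linarith
  -- the limit of b * f b ^ 2 must be 0
  set l : ℝ := 2 * (∫ x in Ioi 0, x * (f x * deriv f x)) + ∫ x in Ioi 0, f x ^ 2 with hl_def
  clear_value l
  have hl0 : l = 0 := by
    rcases lt_trichotomy l 0 with hl | hl | hl
    · -- impossible: b * f b ^ 2 ≥ 0 eventually
      have hev : ∀ᶠ b : ℝ in atTop, b * f b ^ 2 < l / 2 :=
        tW.eventually (eventually_lt_nhds (by linarith))
      obtain ⟨b, hb1, hb2'⟩ := (hev.and (eventually_ge_atTop (0:ℝ))).exists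
      nlinarith [sq_nonneg (f b)]
    · exact hl
    · exfalso
      have hev : ∀ᶠ b : ℝ in atTop, l / 2 < b * f b ^ 2 :=
        tW.eventually (eventually_gt_nhds (by linarith))
      obtain ⟨M, hM⟩ := (hev.and (eventually_ge_atTop (1:ℝ))).exists_forall_of_atTop
      have hM1 : (1:ℝ) ≤ M := (hM M le_rfl).2
      have hinv : IntegrableOn (fun x : ℝ => l / 2 * x⁻¹) (Ioi M) volume := by
        have hmeas : AEStronglyMeasurable (fun x : ℝ => l / 2 * x⁻¹)
            (volume.restrict (Ioi M)) :=
          (measurable_const.mul measurable_inv).aestronglyMeasurable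
        apply Integrable.mono' (hintf2.mono_set (Ioi_subset_Ioi (by linarith))) hmeas
        filter_upwards [ae_restrict_mem measurableSet_Ioi] with x hx
        have hx1 : (1:ℝ) ≤ x := le_trans hM1 (le_of_lt hx)
        have hx0 : (0:ℝ) < x := by linarith
        obtain ⟨h1, _⟩ := hM x (le_of_lt hx)
        have hval : 0 ≤ l / 2 * x⁻¹ := by positivity
        rw [Real.norm_eq_abs, abs_of_nonneg hval]
        calc l / 2 * x⁻¹ ≤ (x * f x ^ 2) * x⁻¹ := by
              apply mul_le_mul_of_nonneg_right h1.le (by positivity)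
          _ = f x ^ 2 := by field_simp
      have hfalse : IntegrableOn (fun x : ℝ => x⁻¹) (Ioi M) volume := by
        have h2 := hinv.const_mul (2 / l)
        apply h2.congr
        filter_upwards with x
        have hl' : l ≠ 0 := ne_of_gt hl
        rw [← mul_assoc, div_mul_div_comm, mul_comm 2 l, div_self (by positivity), one_mul]
      exact not_IntegrableOn_Ioi_inv hfalse
  refine ⟨hIv, hIx2, hIxfv, hident, by rw [hl_def] at hl0; linarith⟩

lemma integrableOn_neg_Ioi_iff {F : ℝ → ℝ} :
    IntegrableOn (fun x => F (-x)) (Ioi (0:ℝ)) volume ↔ IntegrableOn F (Iio (0:ℝ)) volume := by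
  conv_rhs => rw [← Measure.map_neg_eq_self (volume : Measure ℝ)]
  rw [measurableEmbedding_neg.integrableOn_map_iff]
  simp [Function.comp_def]

lemma integral_neg_Ioi (F : ℝ → ℝ) : (∫ x in Ioi (0:ℝ), F (-x)) = ∫ x in Iio (0:ℝ), F x := by
  rw [show (∫ x in Ioi (0:ℝ), F (-x)) = ∫ x in Iic (0:ℝ), F x by simpa using integral_comp_neg_Ioi 0 F]
  rw [integral_Iic_eq_integral_Iio]

lemma glob (hb E : ℝ) (f : ℝ → ℝ) (hhb : 0 < hb) (hreg : ContDiff ℝ 2 f)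
    (hL2 : Integrable (fun x : ℝ => f x ^ 2) volume)
    (hODE : ∀ x, deriv (deriv f) x = ((x ^ 2 - 2 * E) / hb ^ 2) * f x)
    (side : ∀ (F : ℝ → ℝ), ContDiff ℝ 2 F → Integrable (fun x : ℝ => F x ^ 2) volume →
      (∀ x, deriv (deriv F) x = ((x ^ 2 - 2 * E) / hb ^ 2) * F x) →
      IntegrableOn (fun x => deriv F x ^ 2) (Ioi 0) volume ∧
      IntegrableOn (fun x => x ^ 2 * F x ^ 2) (Ioi 0) volume ∧
      IntegrableOn (fun x => x * (F x * deriv F x)) (Ioi 0) volume ∧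
      hb ^ 2 * (∫ x in Ioi 0, deriv F x ^ 2) + (∫ x in Ioi 0, x ^ 2 * F x ^ 2)
        = 2 * E * (∫ x in Ioi 0, F x ^ 2) - hb ^ 2 * (F 0 * deriv F 0) ∧
      (∫ x in Ioi 0, x * (F x * deriv F x)) = -(1 / 2) * ∫ x in Ioi 0, F x ^ 2) :
    Integrable (fun x => deriv f x ^ 2) volume ∧
    Integrable (fun x => x ^ 2 * f x ^ 2) volume ∧
    Integrable (fun x => x * (f x * deriv f x)) volume ∧
    hb ^ 2 * (∫ x, deriv f x ^ 2) + (∫ x, x ^ 2 * f x ^ 2) = 2 * E * ∫ x, f x ^ 2 ∧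
    (∫ x, x * (f x * deriv f x)) = -(1 / 2) * ∫ x, f x ^ 2 := by
  obtain ⟨I1, I2, I3, Id1, Id2⟩ := side f hreg hL2 hODE
  -- the reflected function
  set g : ℝ → ℝ := fun x => f (-x) with hg_def
  have hreg' : ContDiff ℝ 2 g := hreg.comp (contDiff_id.neg)
  have hgderiv : deriv g = fun x => -deriv f (-x) := by
    funext x
    exact deriv_comp_neg f x
  have hL2' : Integrable (fun x : ℝ => g x ^ 2) volume := by
    have := hL2.comp_neg
    exact this
  have hODE' : ∀ x, deriv (deriv g) x = ((x ^ 2 - 2 * E) / hb ^ 2) * g x := by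
    intro x
    rw [hgderiv]
    have e1 : deriv (fun y => -deriv f (-y)) x = -(deriv (fun y => deriv f (-y)) x) := by
      rw [← deriv.neg]; rfl
    rw [e1, deriv_comp_neg (deriv f), hODE (-x)]
    simp only [hg_def, neg_neg, neg_sq]
  obtain ⟨J1, J2, J3, Jd1, Jd2⟩ := side g hreg' hL2' hODE'
  -- rewrite the g-quantities as reflections of f-quantities
  have e1 : (fun x => deriv g x ^ 2) = fun x => (fun y => deriv f y ^ 2) (-x) := by
    funext x; rw [hgderiv]; simp
  have e2 : (fun x => x ^ 2 * g x ^ 2) = fun x => (fun y => y ^ 2 * f y ^ 2) (-x) := by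
    funext x; simp [hg_def]
  have e3 : (fun x => x * (g x * deriv g x)) = fun x => (fun y => y * (f y * deriv f y)) (-x) := by
    funext x; rw [hgderiv]; simp [hg_def]
  have e4 : (fun x => g x ^ 2) = fun x => (fun y => f y ^ 2) (-x) := rfl
  rw [e1] at J1 Jd1
  rw [e2] at J2 Jd1
  rw [e3] at J3 Jd2
  rw [e4] at Jd1 Jd2
  rw [integral_neg_Ioi (fun y => deriv f y ^ 2), integral_neg_Ioi (fun y => y ^ 2 * f y ^ 2),
    integral_neg_Ioi (fun y => f y ^ 2)] at Jd1
  rw [integral_neg_Ioi (fun y => y * (f y * deriv f y)), integral_neg_Ioi (fun y => f y ^ 2)] at Jd2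
  replace J1 := (integrableOn_neg_Ioi_iff (F := fun y => deriv f y ^ 2)).mp J1
  replace J2 := (integrableOn_neg_Ioi_iff (F := fun y => y ^ 2 * f y ^ 2)).mp J2
  replace J3 := (integrableOn_neg_Ioi_iff (F := fun y => y * (f y * deriv f y))).mp J3
  have g0 : g 0 = f 0 := by simp [hg_def]
  have g0' : deriv g 0 = -deriv f 0 := by rw [hgderiv]; simp
  rw [g0, g0'] at Jd1
  -- global integrability
  have K1 : Integrable (fun x => deriv f x ^ 2) volume := by
    rw [← integrableOn_univ, ← Set.Iic_union_Ioi (a := (0:ℝ))]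
    exact (Iff.mpr integrableOn_Iic_iff_integrableOn_Iio J1).union I1
  have K2 : Integrable (fun x => x ^ 2 * f x ^ 2) volume := by
    rw [← integrableOn_univ, ← Set.Iic_union_Ioi (a := (0:ℝ))]
    exact (Iff.mpr integrableOn_Iic_iff_integrableOn_Iio J2).union I2
  have K3 : Integrable (fun x => x * (f x * deriv f x)) volume := by
    rw [← integrableOn_univ, ← Set.Iic_union_Ioi (a := (0:ℝ))]
    exact (Iff.mpr integrableOn_Iic_iff_integrableOn_Iio J3).union I3
  -- splitting the integrals over ℝ
  have S : ∀ (F : ℝ → ℝ), Integrable F volume →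
      (∫ x, F x) = (∫ x in Iio (0:ℝ), F x) + ∫ x in Ioi (0:ℝ), F x := by
    intro F hF
    rw [← integral_Iic_eq_integral_Iio,
      intervalIntegral.integral_Iic_add_Ioi hF.integrableOn hF.integrableOn]
  rw [S _ K1, S _ K2, S _ K3, S _ hL2]
  refine ⟨K1, K2, K3, by linarith, by linarith⟩

lemma boot {f : ℝ → ℝ} {c : ℝ → ℝ} (hc : ∀ m : ℕ, ContDiff ℝ m c) (hreg : ContDiff ℝ 2 f)
    (h2 : deriv (deriv f) = fun x => c x * f x) : ∀ n : ℕ, ContDiff ℝ n f := by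
  intro n
  induction n with
  | zero => exact hreg.of_le (by norm_num)
  | succ n ih =>
    rcases Nat.lt_or_ge (n + 1) 2 with h | h
    · exact hreg.of_le (by exact_mod_cast Nat.le_of_lt_succ (by omega))
    · -- n + 1 ≥ 2 : use the ODE
      have hd1 : Differentiable ℝ f := hreg.differentiable (by norm_num)
      have hd2 : Differentiable ℝ (deriv f) := by
        have := (contDiff_succ_iff_deriv (n := 1)).1 (by exact_mod_cast hreg)
        exact this.2.2.differentiable (by norm_num)
      have hcdd : ContDiff ℝ (n - 1 : ℕ) (deriv (deriv f)) := by
        rw [h2]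
        exact (hc (n-1)).mul (ih.of_le (by exact_mod_cast Nat.sub_le n 1))
      have hcd : ContDiff ℝ (n : ℕ) (deriv f) := by
        have : ((n - 1 : ℕ) + 1 : ℕ) = n := by omega
        rw [← this]
        exact (contDiff_succ_iff_deriv (n := (n-1:ℕ))).2 ⟨hd2, by simp, by exact_mod_cast hcdd⟩
      exact (contDiff_succ_iff_deriv (n := (n:ℕ))).2 ⟨hd1, by simp, by exact_mod_cast hcd⟩

lemma lower (hb E : ℝ) (f : ℝ → ℝ) (hhb : 0 < hb) (hreg : ContDiff ℝ 2 f)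
    (hL2 : Integrable (fun x : ℝ => f x ^ 2) volume)
    (hODE : ∀ x, deriv (deriv f) x = ((x ^ 2 - 2 * E) / hb ^ 2) * f x)
    (hnz : ∃ x, f x ≠ 0) :
    hb ≤ 2 * E ∧
    (hb ≠ 2 * E →
      ∃ g : ℝ → ℝ, ContDiff ℝ 2 g ∧ Integrable (fun x : ℝ => g x ^ 2) volume ∧
        (∀ x, deriv (deriv g) x = ((x ^ 2 - 2 * (E - hb)) / hb ^ 2) * g x) ∧ ∃ x, g x ≠ 0) := by
  obtain ⟨K1, K2, K3, Id1, Id2⟩ := glob hb E f hhb hreg hL2 hODE (fun F h1 h2 h3 => side hb E F hhb h1 h2 h3)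
  have hb2 : (hb : ℝ) ^ 2 ≠ 0 := pow_ne_zero 2 (ne_of_gt hhb)
  have hdiff : Differentiable ℝ f := hreg.differentiable (by norm_num)
  have hdiff' : Differentiable ℝ (deriv f) := by
    have := (contDiff_succ_iff_deriv (n := 1)).1 (by exact_mod_cast hreg)
    exact this.2.2.differentiable (by norm_num)
  have hcontf : Continuous f := hdiff.continuous
  have hcontv : Continuous (deriv f) := hdiff'.continuous
  have hdu : ∀ x, HasDerivAt f (deriv f x) x := fun x => (hdiff x).hasDerivAt
  have hdv : ∀ x, HasDerivAt (deriv f) (((x ^ 2 - 2 * E) / hb ^ 2) * f x) x := by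
    intro x
    have := (hdiff' x).hasDerivAt
    rwa [hODE x] at this
  -- positivity of the L² norm
  have hNpos : 0 < ∫ x, f x ^ 2 := by
    rw [integral_pos_iff_support_of_nonneg (fun x => sq_nonneg (f x)) hL2]
    obtain ⟨x₀, hx₀⟩ := hnz
    have hopen : IsOpen (Function.support fun x => f x ^ 2) := by
      have : (Function.support fun x => f x ^ 2) = (fun x => f x ^ 2) ⁻¹' ({0}ᶜ) := by
        ext y; simp [Function.mem_support]
      rw [this]
      exact (isOpen_compl_singleton).preimage (hcontf.pow 2)
    apply hopen.measure_pos volume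
    exact ⟨x₀, by simp [Function.mem_support, pow_eq_zero_iff]; exact hx₀⟩
  -- the lowered function
  set g : ℝ → ℝ := fun x => hb * deriv f x + x * f x with hg_def
  have hgsq : (fun x => g x ^ 2) = fun x =>
      hb ^ 2 * (deriv f x ^ 2) + x ^ 2 * f x ^ 2 + (2 * hb) * (x * (f x * deriv f x)) := by
    funext x; simp only [hg_def]; ring
  have hA : Integrable (fun x : ℝ => hb ^ 2 * deriv f x ^ 2) volume := K1.const_mul _
  have hAB : Integrable (fun x : ℝ => hb ^ 2 * deriv f x ^ 2 + x ^ 2 * f x ^ 2) volume := hA.add K2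
  have hC : Integrable (fun x : ℝ => (2 * hb) * (x * (f x * deriv f x))) volume := K3.const_mul _
  have hIg : Integrable (fun x : ℝ => g x ^ 2) volume := by
    rw [hgsq]
    exact hAB.add hC
  have hIgval : (∫ x, g x ^ 2) = (2 * E - hb) * ∫ x, f x ^ 2 := by
    rw [hgsq, MeasureTheory.integral_add hAB hC, MeasureTheory.integral_add hA K2,
      MeasureTheory.integral_const_mul, MeasureTheory.integral_const_mul, Id2]
    linarith
  have hIgpos : 0 ≤ ∫ x, g x ^ 2 := integral_nonneg (fun x => sq_nonneg (g x))
  have hEge : hb ≤ 2 * E := by nlinarith [hIgval]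
  refine ⟨hEge, fun hne => ?_⟩
  have hEgt : hb < 2 * E := lt_of_le_of_ne hEge hne
  -- derivative computations for g
  have hdg : ∀ x, HasDerivAt g (hb * (((x ^ 2 - 2 * E) / hb ^ 2) * f x) + (f x + x * deriv f x)) x := by
    intro x
    have h1 : HasDerivAt (fun y => hb * deriv f y) (hb * (((x ^ 2 - 2 * E) / hb ^ 2) * f x)) x :=
      (hdv x).const_mul hb
    have h2 : HasDerivAt (fun y => y * f y) (1 * f x + x * deriv f x) x :=
      (hasDerivAt_id x).mul (hdu x)
    have := h1.fun_add h2
    simpa using this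
  have hgderiv : deriv g = fun x => hb * (((x ^ 2 - 2 * E) / hb ^ 2) * f x) + (f x + x * deriv f x) :=
    funext fun x => (hdg x).deriv
  have hODEg : ∀ x, deriv (deriv g) x = ((x ^ 2 - 2 * (E - hb)) / hb ^ 2) * g x := by
    intro x
    rw [hgderiv]
    have hq : HasDerivAt (fun y : ℝ => (y ^ 2 - 2 * E) / hb ^ 2) (2 * x / hb ^ 2) x := by
      have := ((hasDerivAt_pow 2 x).sub_const (2 * E)).div_const (hb ^ 2)
      simpa using this
    have h1 : HasDerivAt (fun y => hb * (((y ^ 2 - 2 * E) / hb ^ 2) * f y))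
        (hb * ((2 * x / hb ^ 2) * f x + ((x ^ 2 - 2 * E) / hb ^ 2) * deriv f x)) x :=
      ((hq.mul (hdu x))).const_mul hb
    have h2 : HasDerivAt (fun y => f y + y * deriv f y)
        (deriv f x + (1 * deriv f x + x * (((x ^ 2 - 2 * E) / hb ^ 2) * f x))) x :=
      (hdu x).add ((hasDerivAt_id x).mul (hdv x))
    have := (h1.fun_add h2).deriv
    rw [this]
    simp only [hg_def]
    field_simp
    ring
  -- regularity of g
  have hsmooth : ∀ n : ℕ, ContDiff ℝ n f := by
    apply boot (c := fun x : ℝ => (x ^ 2 - 2 * E) / hb ^ 2) _ hreg (funext hODE)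
    intro m
    apply ContDiff.div_const
    exact (contDiff_id.pow 2).sub contDiff_const
  have hregg : ContDiff ℝ 2 g := by
    have hf3 : ContDiff ℝ 3 f := hsmooth 3
    have hdf2 : ContDiff ℝ 2 (deriv f) := by
      have := (contDiff_succ_iff_deriv (n := 2)).1 (by exact_mod_cast hf3)
      exact this.2.2
    exact ((contDiff_const.mul hdf2)).add (contDiff_id.mul (hf3.of_le (by norm_num)))
  -- g is not identically zero
  have hgnz : ∃ x, g x ≠ 0 := by
    by_contra hz
    push_neg at hz
    have : (∫ x, g x ^ 2) = 0 := by
      simp [hz]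
    nlinarith [hNpos]
  exact ⟨g, hregg, hIg, hODEg, hgnz⟩


lemma no_sol (hb : ℝ) (hhb : 0 < hb) : ∀ (k : ℕ) (E : ℝ) (f : ℝ → ℝ),
    (∀ n : ℕ, E ≠ hb * ((n : ℝ) + 1 / 2)) → E < hb * k + hb / 2 →
    ContDiff ℝ 2 f → Integrable (fun x : ℝ => f x ^ 2) volume →
    (∀ x, deriv (deriv f) x = ((x ^ 2 - 2 * E) / hb ^ 2) * f x) → ∀ x, f x = 0 := by
  intro k
  induction k with
  | zero =>
    intro E f hE hlt hreg hL2 hODE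
    by_contra hcon
    push_neg at hcon
    obtain ⟨hge, _⟩ := lower hb E f hhb hreg hL2 hODE hcon
    simp only [Nat.cast_zero, mul_zero, zero_add] at hlt
    linarith
  | succ k ih =>
    intro E f hE hlt hreg hL2 hODE
    by_contra hcon
    push_neg at hcon
    obtain ⟨hge, hstep⟩ := lower hb E f hhb hreg hL2 hODE hcon
    have hneq : hb ≠ 2 * E := by
      intro h
      exact hE 0 (by push_cast; linarith)
    obtain ⟨g, hg1, hg2, hg3, x₀, hg4⟩ := hstep hneq
    have hE' : ∀ n : ℕ, E - hb ≠ hb * ((n : ℝ) + 1 / 2) := by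
      intro n h
      apply hE (n + 1)
      push_cast
      linarith
    have hlt' : E - hb < hb * k + hb / 2 := by
      push_cast at hlt
      linarith
    exact hg4 (ih (E - hb) g hE' hlt' hg1 hg2 hg3 x₀)

/-- For `hb > 0` and a real energy `E` that is not of the form
`hb(n + 1/2)` for any natural number `n`, every twice continuously
differentiable, square-integrable solution `f : ℝ → ℝ` of the
harmonic-oscillator eigenvalue equation
`(1/2)(x² f(x) - hb² f''(x)) = E f(x)` vanishes identically. -/
theorem stmt11 (hb : ℝ) (hhb : 0 < hb) (E : ℝ)
    (hE : ∀ n : ℕ, E ≠ hb * ((n : ℝ) + 1 / 2))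
    (f : ℝ → ℝ) (hreg : ContDiff ℝ 2 f)
    (hL2 : MeasureTheory.Integrable (fun x : ℝ => (f x) ^ 2) MeasureTheory.volume)
    (heq : ∀ x : ℝ, (1 / 2) * (x ^ 2 * f x - hb ^ 2 * deriv (deriv f) x) = E * f x) :
    ∀ x : ℝ, f x = 0 := by
  have hb2 : (hb : ℝ) ^ 2 ≠ 0 := pow_ne_zero 2 (ne_of_gt hhb)
  have hODE : ∀ x, deriv (deriv f) x = ((x ^ 2 - 2 * E) / hb ^ 2) * f x := by
    intro x
    have := heq x
    field_simp
    linarith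
  obtain ⟨k, hk⟩ := exists_nat_gt ((E - hb / 2) / hb)
  have hlt : E < hb * k + hb / 2 := by
    rw [div_lt_iff₀ hhb] at hk
    linarith
  exact no_sol hb hhb k E f hE hlt hreg hL2 hODE
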